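/- Let f : (0,∞) → (0,∞) be continuous and strictly increasing with lim_{r→0+} f(r) = 0 and lim_{r→∞} f(r) = ∞, and let f^{−1} : (0,∞) → (0,∞) be its inverse. Assume: (i) liminf_{r→∞} f(r)/log r > 0; (ii) liminf_{r→0+} f(r)·|log r| < ∞; (iii) limsup_{s→0+} f^{−1}(2s)/f^{−1}(s) < ∞. Then there exist constants C > 0 and t₀ > 0 such that for every t ≥ t₀: ∫₀^∞ r^{−1/2} e^{−t f(r)} dr ≤ C √(f^{−1}(1/t)). -/

import Mathlib

open MeasureTheory Real Set Filter
open scoped RealInnerProductSpace ENNReal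

/-- Total variation distance (total variation norm of the signed measure `μ - ν`)
for finite measures, valued in `ℝ≥0∞`. -/
noncomputable def tvDist {E : Type*} [MeasurableSpace E] (μ ν : Measure E) : ℝ≥0∞ :=
  (⨆ (A : Set E) (_ : MeasurableSet A), μ A - ν A) +
    (⨆ (A : Set E) (_ : MeasurableSet A), ν A - μ A)

lemma lint_half (A : ℝ) (hA : 0 ≤ A) :
    ∫⁻ r in Set.Ioc (0:ℝ) A, ENNReal.ofReal (r ^ (-(1/2) : ℝ)) = ENNReal.ofReal (2 * Real.sqrt A) := by
  rcases eq_or_lt_of_le hA with h | h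
  · simp [← h]
  · have hint : IntegrableOn (fun r : ℝ => r ^ (-(1/2) : ℝ)) (Set.Ioc 0 A) := by
      have := intervalIntegral.intervalIntegrable_rpow' (a := 0) (b := A) (r := -(1/2)) (by norm_num)
      rwa [intervalIntegrable_iff_integrableOn_Ioc_of_le hA] at this
    have hnn : 0 ≤ᵐ[volume.restrict (Set.Ioc (0:ℝ) A)] fun r : ℝ => r ^ (-(1/2) : ℝ) :=
      (ae_restrict_iff' measurableSet_Ioc).2 (ae_of_all _ fun x hx => Real.rpow_nonneg hx.1.le _)
    rw [← ofReal_integral_eq_lintegral_ofReal hint hnn]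
    congr 1
    rw [← intervalIntegral.integral_of_le hA, integral_rpow (Or.inl (by norm_num))]
    rw [Real.zero_rpow (by norm_num), Real.sqrt_eq_rpow]
    norm_num
    ring

lemma lint_Ioi_rpow (p A : ℝ) (hp : p < -1) (hA : 0 < A) :
    ∫⁻ r in Set.Ioi A, ENNReal.ofReal (r ^ p) = ENNReal.ofReal (-A ^ (p+1)/(p+1)) := by
  have hint := integrableOn_Ioi_rpow_of_lt hp hA
  have hnn : 0 ≤ᵐ[volume.restrict (Set.Ioi A)] fun r : ℝ => r ^ p :=
    (ae_restrict_iff' measurableSet_Ioi).2 (ae_of_all _ fun x hx =>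
      Real.rpow_nonneg (le_of_lt (lt_trans hA hx)) _)
  rw [← ofReal_integral_eq_lintegral_ofReal hint hnn, integral_Ioi_rpow_of_lt hp hA]

set_option maxHeartbeats 1600000 in
theorem statement6 (f g : ℝ → ℝ)
    (hcont : ContinuousOn f (Set.Ioi 0))
    (hmono : StrictMonoOn f (Set.Ioi 0))
    (hpos : ∀ r : ℝ, 0 < r → 0 < f r)
    (hf0 : Filter.Tendsto f (nhdsWithin 0 (Set.Ioi 0)) (nhds 0))
    (hfinf : Filter.Tendsto f Filter.atTop Filter.atTop)
    -- `g = f⁻¹ : (0,∞) → (0,∞)` is the inverse of `f`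
    (hfg : ∀ s : ℝ, 0 < s → 0 < g s ∧ f (g s) = s)
    (hgf : ∀ r : ℝ, 0 < r → g (f r) = r)
    -- (i) `liminf_{r→∞} f(r)/log r > 0`
    (hi : ∃ a > (0 : ℝ), ∀ᶠ r in Filter.atTop, a ≤ f r / Real.log r)
    -- (ii) `liminf_{r→0+} f(r)·|log r| < ∞`
    (hii : ∃ M : ℝ, ∃ᶠ r in nhdsWithin 0 (Set.Ioi 0), f r * |Real.log r| ≤ M)
    -- (iii) `limsup_{s→0+} f⁻¹(2s)/f⁻¹(s) < ∞`
    (hiii : ∃ K : ℝ, ∀ᶠ s in nhdsWithin 0 (Set.Ioi 0), g (2 * s) / g s ≤ K) :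
    ∃ C : ℝ, 0 < C ∧ ∃ t₀ : ℝ, 0 < t₀ ∧ ∀ t : ℝ, t₀ ≤ t →
      (∫⁻ r in Set.Ioi (0 : ℝ),
          ENNReal.ofReal (r ^ (-(1 / 2) : ℝ) * Real.exp (-(t * f r))))
        ≤ ENNReal.ofReal (C * Real.sqrt (g (1 / t))) := by
  obtain ⟨a, hapos, haev⟩ := hi
  obtain ⟨R₀, hR₀⟩ := Filter.eventually_atTop.mp haev
  obtain ⟨K₀, hK₀ev⟩ := hiii
  obtain ⟨ε, hεpos, hεK⟩ := (nhdsGT_basis (0:ℝ)).eventually_iff.mp hK₀ev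
  set K := max K₀ 2 with hKdef
  have hK2 : (2:ℝ) ≤ K := le_max_right _ _
  have hK0 : (0:ℝ) < K := lt_of_lt_of_le two_pos hK2
  have hK1 : (1:ℝ) ≤ K := by linarith
  set s₁ := ε/2 with hs₁def
  have hs₁ : 0 < s₁ := by positivity
  have hs₁ε : s₁ < ε := by rw [hs₁def]; linarith
  have gpos : ∀ s : ℝ, 0 < s → 0 < g s := fun s hs => (hfg s hs).1
  have gval : ∀ s : ℝ, 0 < s → f (g s) = s := fun s hs => (hfg s hs).2
  have fmono : ∀ x y : ℝ, 0 < x → x ≤ y → f x ≤ f y := fun x y hx hxy =>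
    hmono.monotoneOn (Set.mem_Ioi.2 hx) (Set.mem_Ioi.2 (lt_of_lt_of_le hx hxy)) hxy
  have gmono : ∀ s s' : ℝ, 0 < s → s ≤ s' → g s ≤ g s' := by
    intro s s' hs hss'
    have hs' : 0 < s' := lt_of_lt_of_le hs hss'
    refine (hmono.le_iff_le (Set.mem_Ioi.2 (gpos s hs)) (Set.mem_Ioi.2 (gpos s' hs'))).mp ?_
    rw [gval s hs, gval s' hs']; exact hss'
  have hdouble : ∀ s : ℝ, 0 < s → s ≤ s₁ → g (2*s) ≤ K * g s := by
    intro s hs hle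
    have h1 := hεK ⟨hs, lt_of_le_of_lt hle hs₁ε⟩
    exact (div_le_iff₀ (gpos s hs)).mp (h1.trans (le_max_left K₀ 2))
  -- iterated doubling, downward
  have hchain : ∀ n : ℕ, g s₁ ≤ K^n * g (s₁ / 2^n) := by
    intro n
    induction n with
    | zero => simp
    | succ n ih =>
      have hsd : (0:ℝ) < s₁/2^(n+1) := by positivity
      have hone : (1:ℝ) ≤ 2^(n+1) := one_le_pow₀ one_le_two
      have hle : s₁/2^(n+1) ≤ s₁ := div_le_self hs₁.le hone
      have hd := hdouble _ hsd hle
      have h2s : 2 * (s₁/2^(n+1)) = s₁/2^n := by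
        field_simp; ring
      rw [h2s] at hd
      calc g s₁ ≤ K^n * g (s₁/2^n) := ih
        _ ≤ K^n * (K * g (s₁/2^(n+1))) := by
            exact mul_le_mul_of_nonneg_left hd (pow_nonneg hK0.le n)
        _ = K^(n+1) * g (s₁/2^(n+1)) := by ring
  -- iterated doubling, upward
  have hup : ∀ n : ℕ, ∀ s : ℝ, 0 < s → 2^n * s ≤ 2 * s₁ → g (2^n * s) ≤ K^n * g s := by
    intro n
    induction n with
    | zero => intro s hs _; simp
    | succ n ih =>
      intro s hs hbound
      have h2n : (0:ℝ) < 2^n * s := by positivity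
      have hsmall : 2^n * s ≤ s₁ := by
        have : (2:ℝ) * (2^n * s) ≤ 2 * s₁ := by
          calc (2:ℝ) * (2^n * s) = 2^(n+1) * s := by ring
            _ ≤ 2 * s₁ := hbound
        linarith
      have hd := hdouble _ h2n hsmall
      have ihh := ih s hs (le_trans hsmall (by linarith))
      calc g (2^(n+1) * s) = g (2 * (2^n * s)) := by ring_nf
        _ ≤ K * g (2^n * s) := hd
        _ ≤ K * (K^n * g s) := mul_le_mul_of_nonneg_left ihh hK0.le
        _ = K^(n+1) * g s := by ring
  set β := Real.logb 2 K with hβdef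
  have hβ1 : 1 ≤ β := by
    have h := Real.logb_le_logb_of_le one_lt_two two_pos hK2
    rwa [Real.logb_self_eq_one one_lt_two] at h
  have hβpos : 0 < β := lt_of_lt_of_le one_pos hβ1
  have hgs₁ : 0 < g s₁ := gpos s₁ hs₁
  set c := g s₁ / (K * s₁ ^ β) with hcdef
  have hcpos : 0 < c := div_pos hgs₁ (mul_pos hK0 (Real.rpow_pos_of_pos hs₁ β))
  -- power lower bound for g
  have hglb : ∀ s : ℝ, 0 < s → s ≤ s₁ → c * s ^ β ≤ g s := by
    intro s hs hss₁
    set n := ⌈Real.logb 2 (s₁ / s)⌉₊ with hn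
    have hrat : 1 ≤ s₁ / s := (one_le_div hs).mpr hss₁
    have hlogb0 : 0 ≤ Real.logb 2 (s₁/s) := Real.logb_nonneg one_lt_two hrat
    have h2n : s₁ / s ≤ 2^n := by
      have e1 : s₁/s = (2:ℝ) ^ Real.logb 2 (s₁/s) :=
        (Real.rpow_logb two_pos (by norm_num) (by positivity)).symm
      rw [e1, ← Real.rpow_natCast 2 n]
      exact Real.rpow_le_rpow_of_exponent_le one_le_two (Nat.le_ceil _)
    have hcount : s₁ / 2^n ≤ s := by
      rw [div_le_iff₀ (pow_pos two_pos n)]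
      calc s₁ = (s₁/s)*s := by field_simp
        _ ≤ 2^n * s := mul_le_mul_of_nonneg_right h2n hs.le
        _ = s * 2^n := by ring
    have h1 : g s₁ ≤ K^n * g s :=
      (hchain n).trans (mul_le_mul_of_nonneg_left (gmono _ _ (by positivity) hcount)
        (pow_nonneg hK0.le n))
    have hKn : (K:ℝ)^n ≤ K * (s₁/s)^β := by
      have hnle : (n:ℝ) ≤ Real.logb 2 (s₁/s) + 1 := (Nat.ceil_lt_add_one hlogb0).le
      have e2 : K ^ (Real.logb 2 (s₁/s)) = (s₁/s)^β := by
        rw [Real.rpow_def_of_pos hK0, Real.rpow_def_of_pos (by positivity : (0:ℝ) < s₁/s)]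
        congr 1
        simp only [hβdef, Real.logb]
        ring
      calc (K:ℝ)^n = K ^ ((n:ℝ)) := (Real.rpow_natCast K n).symm
        _ ≤ K ^ (Real.logb 2 (s₁/s) + 1) :=
            Real.rpow_le_rpow_of_exponent_le hK1 hnle
        _ = K ^ (Real.logb 2 (s₁/s)) * K := by rw [Real.rpow_add hK0, Real.rpow_one]
        _ = (s₁/s)^β * K := by rw [e2]
        _ = K * (s₁/s)^β := mul_comm _ _
    have hsβ : (s₁/s)^β = s₁^β / s^β := Real.div_rpow hs₁.le hs.le β
    rw [hsβ] at hKn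
    have h2 : g s₁ ≤ K * (s₁^β/s^β) * g s :=
      h1.trans (mul_le_mul_of_nonneg_right hKn (gpos s hs).le)
    have hsβpos : 0 < s^β := Real.rpow_pos_of_pos hs β
    have hs₁β : 0 < s₁^β := Real.rpow_pos_of_pos hs₁ β
    rw [hcdef, div_mul_eq_mul_div, div_le_iff₀ (by positivity)]
    calc g s₁ * s^β ≤ (K * (s₁^β/s^β) * g s) * s^β := mul_le_mul_of_nonneg_right h2 hsβpos.le
      _ = g s * (K * s₁^β) := by field_simp

  set r₁ := g s₁ with hr₁def
  set R := max R₀ (max r₁ 2) with hRdef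
  have hR2 : (2:ℝ) ≤ R := le_trans (le_max_right _ _) (le_max_right _ _)
  have hRr₁ : r₁ ≤ R := le_trans (le_max_left _ _) (le_max_right _ _)
  have hR0 : (0:ℝ) < R := by linarith
  have hflogR : ∀ r : ℝ, R ≤ r → a * Real.log r ≤ f r := by
    intro r hr
    have h1 := hR₀ r (le_trans (le_max_left _ _) hr)
    have hlog : 0 < Real.log r := Real.log_pos (lt_of_lt_of_le one_lt_two (le_trans hR2 hr))
    exact (le_div_iff₀ hlog).mp h1
  -- the geometric-type series
  set q := Real.sqrt K with hqdef
  have hq1 : 1 ≤ q := by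
    rw [hqdef, show (1:ℝ) = Real.sqrt 1 from (Real.sqrt_one).symm]
    exact Real.sqrt_le_sqrt hK1
  have hq0 : 0 < q := lt_of_lt_of_le one_pos hq1
  set aa : ℕ → ℝ := fun k => Real.exp (-(2:ℝ)^k) * (2 * q^(k+1)) with haadef
  have haapos : ∀ k, 0 < aa k := fun k => by
    have := Real.exp_pos (-(2:ℝ)^k); positivity
  have hsummable : Summable aa := by
    apply summable_of_ratio_norm_eventually_le (r := 1/2) (by norm_num)
    have htend : Tendsto (fun k : ℕ => q * Real.exp (-(2:ℝ)^k)) atTop (nhds 0) := by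
      have h1 : Tendsto (fun k : ℕ => ((2:ℝ)^k)) atTop atTop :=
        tendsto_pow_atTop_atTop_of_one_lt one_lt_two
      have h2 := (Real.tendsto_exp_neg_atTop_nhds_zero).comp h1
      have := h2.const_mul q
      simpa using this
    filter_upwards [Filter.Tendsto.eventually_lt_const (by norm_num : (0:ℝ) < 1/2) htend]
      with k hk
    rw [Real.norm_eq_abs, Real.norm_eq_abs, abs_of_pos (haapos _), abs_of_pos (haapos _)]
    have hexp : Real.exp (-(2:ℝ)^(k+1)) = Real.exp (-(2:ℝ)^k) * Real.exp (-(2:ℝ)^k) := by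
      rw [← Real.exp_add]; ring_nf
    have heq : aa (k+1) = (q * Real.exp (-(2:ℝ)^k)) * aa k := by
      simp only [haadef]; rw [hexp]; ring
    rw [heq]
    exact mul_le_mul_of_nonneg_right hk.le (haapos k).le
  set S := ∑' k, aa k with hSdef
  have hS0 : 0 ≤ S := tsum_nonneg (fun k => (haapos k).le)
  -- asymptotic comparisons
  have hEaux : ∀ A b : ℝ, 0 ≤ A → 0 < b →
      ∀ᶠ t in Filter.atTop,
        A * (t ^ (β/2) * Real.exp (-(b*t))) ≤ Real.sqrt c * t ^ (-(β/2)) := by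
    intro A b hA hb
    have hT := tendsto_rpow_mul_exp_neg_mul_atTop_nhds_zero β b hb
    have hpos' : 0 < Real.sqrt c / (A+1) := by
      have := Real.sqrt_pos.mpr hcpos; positivity
    filter_upwards [Filter.Tendsto.eventually_lt_const hpos' hT,
      Filter.eventually_gt_atTop (0:ℝ)] with t h1 h2
    rw [neg_mul] at h1
    have ht2 : (0:ℝ) < t ^ (β/2) := Real.rpow_pos_of_pos h2 _
    have key : A * (t^(β/2) * Real.exp (-(b*t))) * t^(β/2) ≤ Real.sqrt c := by
      have heq : t^(β/2) * t^(β/2) = t^β := by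
        rw [← Real.rpow_add h2]; ring_nf
      have hA1 : (0:ℝ) < A + 1 := by linarith
      calc A * (t^(β/2) * Real.exp (-(b*t))) * t^(β/2)
          = A * (t^β * Real.exp (-(b*t))) := by rw [← heq]; ring
        _ ≤ (A+1) * (t^β * Real.exp (-(b*t))) := by
            apply mul_le_mul_of_nonneg_right (by linarith) (by positivity)
        _ ≤ (A+1) * (Real.sqrt c / (A+1)) := by
            exact mul_le_mul_of_nonneg_left h1.le hA1.le
        _ = Real.sqrt c := by field_simp
    rw [Real.rpow_neg h2.le]
    calc A * (t^(β/2) * Real.exp (-(b*t)))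
        = (A * (t^(β/2) * Real.exp (-(b*t))) * t^(β/2)) * (t^(β/2))⁻¹ := by
          field_simp
      _ ≤ Real.sqrt c * (t^(β/2))⁻¹ := by
          exact mul_le_mul_of_nonneg_right key (by positivity)
  have hinvpow : ∀ t : ℝ, 0 < t → (1/t : ℝ)^β = t^(-β) := by
    intro t ht
    rw [Real.div_rpow zero_le_one ht.le, Real.one_rpow, Real.rpow_neg ht.le, one_div]
  have hcomp : ∀ t : ℝ, 0 < t → 1/t ≤ s₁ →
      Real.sqrt c * t ^ (-(β/2)) ≤ Real.sqrt (g (1/t)) := by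
    intro t ht hts
    have h1 : c * (1/t)^β ≤ g (1/t) := hglb (1/t) (by positivity) hts
    rw [hinvpow t ht] at h1
    have h2 : Real.sqrt (c * t^(-β)) = Real.sqrt c * t ^ (-(β/2)) := by
      rw [Real.sqrt_mul hcpos.le]
      congr 1
      rw [Real.sqrt_eq_rpow, ← Real.rpow_mul ht.le, show -β * (1/2) = -(β/2) by ring]
    rw [← h2]
    exact Real.sqrt_le_sqrt h1
  -- choose t₀
  have hev := (hEaux (R * (Real.sqrt c)⁻¹) (s₁/2) (by positivity) (by positivity)).and
    (hEaux (2 * Real.sqrt R) (a * Real.log 2) (by positivity)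
      (mul_pos hapos (Real.log_pos one_lt_two)))
  obtain ⟨T, hT⟩ := Filter.eventually_atTop.mp hev
  refine ⟨4 + S, by linarith, max T (max (2/s₁) (max (2/a) 1)), ?_, ?_⟩
  · have h1 : (0:ℝ) < max (2/a) 1 := lt_of_lt_of_le one_pos (le_max_right _ _)
    exact lt_of_lt_of_le h1 (le_trans (le_max_right _ _) (le_max_right _ _))
  intro t ht
  have htT : T ≤ t := le_trans (le_max_left _ _) ht
  have hts₁' : 2/s₁ ≤ t := le_trans (le_trans (le_max_left _ _) (le_max_right _ _)) ht
  have hta' : 2/a ≤ t :=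
    le_trans (le_trans (le_trans (le_max_left _ _) (le_max_right _ _)) (le_max_right _ _)) ht
  have ht1 : (1:ℝ) ≤ t :=
    le_trans (le_trans (le_trans (le_max_right _ _) (le_max_right _ _)) (le_max_right _ _)) ht
  have ht0 : (0:ℝ) < t := lt_of_lt_of_le one_pos ht1
  have h2ts : 2 ≤ t * s₁ := (div_le_iff₀ hs₁).mp hts₁'
  have hta2 : 2 ≤ t * a := (div_le_iff₀ hapos).mp hta'
  have hinv : 1/t ≤ s₁ := by
    rw [div_le_iff₀ ht0, mul_comm]
    linarith [h2ts]
  set ρ := g (1/t) with hρdef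
  have hρ0 : 0 < ρ := gpos _ (by positivity)
  set N := ⌊Real.logb 2 (t*s₁)⌋₊ with hNdef
  have hts1 : (1:ℝ) ≤ t * s₁ := by linarith
  have hlogN0 : 0 ≤ Real.logb 2 (t*s₁) := Real.logb_nonneg one_lt_two hts1
  have h2N : (2:ℝ)^N ≤ t * s₁ := by
    calc (2:ℝ)^N = (2:ℝ)^((N:ℕ):ℝ) := (Real.rpow_natCast 2 N).symm
      _ ≤ 2 ^ Real.logb 2 (t*s₁) :=
          Real.rpow_le_rpow_of_exponent_le one_le_two (Nat.floor_le hlogN0)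
      _ = t*s₁ := Real.rpow_logb two_pos (by norm_num) (by positivity)
  have h2N' : t * s₁ ≤ (2:ℝ)^(N+1) := by
    calc t*s₁ = (2:ℝ) ^ Real.logb 2 (t*s₁) :=
          (Real.rpow_logb two_pos (by norm_num) (by positivity)).symm
      _ ≤ (2:ℝ) ^ (((N+1 : ℕ)):ℝ) := by
          apply Real.rpow_le_rpow_of_exponent_le one_le_two
          push_cast
          exact (Nat.lt_floor_add_one _).le
      _ = (2:ℝ)^(N+1) := Real.rpow_natCast 2 (N+1)
  set gs : ℕ → ℝ := fun k => g ((2:ℝ)^k / t) with hgsdef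
  have hgs0 : ∀ k, 0 < gs k := fun k => gpos _ (by positivity)
  have hgsmono : ∀ j k : ℕ, j ≤ k → gs j ≤ gs k := by
    intro j k hjk
    apply gmono _ _ (by positivity)
    exact (div_le_div_iff_of_pos_right ht0).mpr (pow_le_pow_right₀ one_le_two hjk)
  have hρgs0 : ρ = gs 0 := by simp [hgsdef, hρdef]
  have hfgs : ∀ k, f (gs k) = (2:ℝ)^k / t := fun k => gval _ (by positivity)
  have hNs₁ : (2:ℝ)^N / t ≤ s₁ := by
    rw [div_le_iff₀ ht0, mul_comm]
    exact h2N
  have hgsN_r₁ : gs N ≤ r₁ := by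
    rw [hr₁def]
    exact gmono _ _ (by positivity) hNs₁
  have hρ_gsN : ρ ≤ gs N := by rw [hρgs0]; exact hgsmono 0 N (Nat.zero_le N)
  have hρlb : c * t^(-β) ≤ ρ := by
    have h1 := hglb (1/t) (by positivity) hinv
    rwa [hinvpow t ht0] at h1
  have hsplit : Set.Ioi (0:ℝ) =
      Set.Ioc 0 ρ ∪ (Set.Ioc ρ (gs N) ∪ (Set.Ioc (gs N) R ∪ Set.Ioi R)) := by
    rw [Set.Ioc_union_Ioi_eq_Ioi (le_trans hgsN_r₁ hRr₁), Set.Ioc_union_Ioi_eq_Ioi hρ_gsN,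
      Set.Ioc_union_Ioi_eq_Ioi hρ0.le]
  have hP0 : ∫⁻ r in Set.Ioc (0:ℝ) ρ,
      ENNReal.ofReal (r ^ (-(1 / 2) : ℝ) * Real.exp (-(t * f r)))
        ≤ ENNReal.ofReal (2 * Real.sqrt ρ) := by
    refine le_trans (setLIntegral_mono' measurableSet_Ioc ?_) (le_of_eq (lint_half ρ hρ0.le))
    intro r hr
    apply ENNReal.ofReal_le_ofReal
    have h1 : Real.exp (-(t * f r)) ≤ 1 := by
      rw [Real.exp_le_one_iff]
      exact neg_nonpos.mpr (mul_nonneg ht0.le (hpos r hr.1).le)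
    calc r ^ (-(1 / 2) : ℝ) * Real.exp (-(t * f r)) ≤ r ^ (-(1 / 2) : ℝ) * 1 :=
        mul_le_mul_of_nonneg_left h1 (Real.rpow_nonneg hr.1.le _)
      _ = r ^ (-(1 / 2) : ℝ) := mul_one _
  have hsqrtpow : ∀ j : ℕ, Real.sqrt (K^j) = q^j := by
    intro j; induction j with
    | zero => simp
    | succ j ihj =>
      rw [pow_succ, Real.sqrt_mul (pow_nonneg hK0.le _) K, ihj, ← hqdef, ← pow_succ]
  have hpiece : ∀ m : ℕ, (2:ℝ)^(m+1) ≤ 2*(t*s₁) →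
      ∫⁻ r in Set.Ioc (gs m) (gs (m+1)),
        ENNReal.ofReal (r ^ (-(1 / 2) : ℝ) * Real.exp (-(t * f r)))
          ≤ ENNReal.ofReal (aa m * Real.sqrt ρ) := by
    intro m hm
    have hps : ∀ r ∈ Set.Ioc (gs m) (gs (m+1)),
        ENNReal.ofReal (r ^ (-(1 / 2) : ℝ) * Real.exp (-(t * f r))) ≤
          ENNReal.ofReal (Real.exp (-(2:ℝ)^m)) * ENNReal.ofReal (r ^ (-(1 / 2) : ℝ)) := by
      intro r hr
      have hr0 : 0 < r := lt_trans (hgs0 m) hr.1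
      have hfr : (2:ℝ)^m / t ≤ f r := by
        rw [← hfgs m]; exact fmono _ _ (hgs0 m) hr.1.le
      have hexp : Real.exp (-(t * f r)) ≤ Real.exp (-(2:ℝ)^m) := by
        apply Real.exp_le_exp.mpr
        rw [div_le_iff₀ ht0] at hfr
        apply neg_le_neg
        rw [mul_comm t (f r)]
        exact hfr
      rw [← ENNReal.ofReal_mul (Real.exp_nonneg _)]
      apply ENNReal.ofReal_le_ofReal
      calc r ^ (-(1 / 2) : ℝ) * Real.exp (-(t*f r))
          ≤ r ^ (-(1 / 2) : ℝ) * Real.exp (-(2:ℝ)^m) :=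
          mul_le_mul_of_nonneg_left hexp (Real.rpow_nonneg hr0.le _)
        _ = Real.exp (-(2:ℝ)^m) * r ^ (-(1 / 2) : ℝ) := mul_comm _ _
    have hub : gs (m+1) ≤ K^(m+1) * ρ := by
      have hcond : (2:ℝ)^(m+1) * (1/t) ≤ 2 * s₁ := by
        rw [mul_one_div, div_le_iff₀ ht0]
        exact hm.trans (le_of_eq (by ring))
      have h := hup (m+1) (1/t) (by positivity) hcond
      rw [mul_one_div] at h
      exact h
    calc ∫⁻ r in Set.Ioc (gs m) (gs (m+1)),
        ENNReal.ofReal (r ^ (-(1 / 2) : ℝ) * Real.exp (-(t * f r)))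
        ≤ ∫⁻ r in Set.Ioc (gs m) (gs (m+1)),
            ENNReal.ofReal (Real.exp (-(2:ℝ)^m)) * ENNReal.ofReal (r ^ (-(1 / 2) : ℝ)) :=
          setLIntegral_mono' measurableSet_Ioc hps
      _ = ENNReal.ofReal (Real.exp (-(2:ℝ)^m)) *
            ∫⁻ r in Set.Ioc (gs m) (gs (m+1)), ENNReal.ofReal (r ^ (-(1 / 2) : ℝ)) :=
          lintegral_const_mul' _ _ ENNReal.ofReal_ne_top
      _ ≤ ENNReal.ofReal (Real.exp (-(2:ℝ)^m)) *
            ∫⁻ r in Set.Ioc (0:ℝ) (gs (m+1)), ENNReal.ofReal (r ^ (-(1 / 2) : ℝ)) := by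
          apply mul_le_mul_right
          exact lintegral_mono_set (Set.Ioc_subset_Ioc_left (hgs0 m).le)
      _ = ENNReal.ofReal (Real.exp (-(2:ℝ)^m)) * ENNReal.ofReal (2 * Real.sqrt (gs (m+1))) := by
          rw [lint_half _ (hgs0 (m+1)).le]
      _ ≤ ENNReal.ofReal (Real.exp (-(2:ℝ)^m)) *
            ENNReal.ofReal (2 * (q^(m+1) * Real.sqrt ρ)) := by
          apply mul_le_mul_right
          apply ENNReal.ofReal_le_ofReal
          apply mul_le_mul_of_nonneg_left _ (by norm_num)
          calc Real.sqrt (gs (m+1)) ≤ Real.sqrt (K^(m+1) * ρ) := Real.sqrt_le_sqrt hub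
            _ = q^(m+1) * Real.sqrt ρ := by
                rw [Real.sqrt_mul (pow_nonneg hK0.le _), hsqrtpow (m+1)]
      _ = ENNReal.ofReal (aa m * Real.sqrt ρ) := by
          rw [← ENNReal.ofReal_mul (Real.exp_nonneg _)]
          congr 1
          simp only [haadef]
          ring
  have claim : ∀ m : ℕ, (2:ℝ)^m ≤ 2*(t*s₁) →
      ∫⁻ r in Set.Ioc (gs 0) (gs m),
        ENNReal.ofReal (r ^ (-(1 / 2) : ℝ) * Real.exp (-(t * f r)))
          ≤ ∑ k ∈ Finset.range m, ENNReal.ofReal (aa k * Real.sqrt ρ) := by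
    intro m
    induction m with
    | zero => intro _; simp
    | succ m ih =>
      intro hm
      have hm' : (2:ℝ)^m ≤ 2*(t*s₁) :=
        le_trans (pow_le_pow_right₀ one_le_two (Nat.le_succ m)) hm
      rw [← Set.Ioc_union_Ioc_eq_Ioc (hgsmono 0 m (Nat.zero_le m))
        (hgsmono m (m+1) (Nat.le_succ m))]
      refine le_trans (lintegral_union_le _ _ _) ?_
      rw [Finset.sum_range_succ]
      exact add_le_add (ih hm') (hpiece m hm)
  have hP1 : ∫⁻ r in Set.Ioc ρ (gs N),
      ENNReal.ofReal (r ^ (-(1 / 2) : ℝ) * Real.exp (-(t * f r)))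
        ≤ ENNReal.ofReal (S * Real.sqrt ρ) := by
    have h1 := claim N (le_trans h2N (by linarith))
    rw [← hρgs0] at h1
    refine le_trans h1 ?_
    rw [← ENNReal.ofReal_sum_of_nonneg
      (fun i _ => mul_nonneg (haapos i).le (Real.sqrt_nonneg _))]
    apply ENNReal.ofReal_le_ofReal
    rw [← Finset.sum_mul]
    exact mul_le_mul_of_nonneg_right
      (Summable.sum_le_tsum (Finset.range N) (fun i _ => (haapos i).le) hsummable) (Real.sqrt_nonneg _)
  have hP2 : ∫⁻ r in Set.Ioc (gs N) R,
      ENNReal.ofReal (r ^ (-(1 / 2) : ℝ) * Real.exp (-(t * f r)))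
        ≤ ENNReal.ofReal (Real.sqrt c * t ^ (-(β/2))) := by
    have hconst : ∀ r ∈ Set.Ioc (gs N) R,
        ENNReal.ofReal (r ^ (-(1 / 2) : ℝ) * Real.exp (-(t * f r))) ≤
          ENNReal.ofReal (ρ^(-(1/2):ℝ) * Real.exp (-(s₁/2*t))) := by
      intro r hr
      have hr0 : 0 < r := lt_trans (hgs0 N) hr.1
      have h1 : r^(-(1/2):ℝ) ≤ ρ^(-(1/2):ℝ) :=
        Real.rpow_le_rpow_of_nonpos hρ0 (le_trans hρ_gsN hr.1.le) (by norm_num)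
      have hfr : (2:ℝ)^N / t ≤ f r := by
        rw [← hfgs N]; exact fmono _ _ (hgs0 N) hr.1.le
      have hs₁2 : s₁/2 ≤ (2:ℝ)^N / t := by
        rw [div_le_div_iff₀ two_pos ht0]
        calc s₁ * t = t * s₁ := mul_comm _ _
          _ ≤ (2:ℝ)^(N+1) := h2N'
          _ = 2^N * 2 := pow_succ 2 N
      have h2 : Real.exp (-(t * f r)) ≤ Real.exp (-(s₁/2*t)) := by
        apply Real.exp_le_exp.mpr
        have h3 : s₁/2 ≤ f r := le_trans hs₁2 hfr
        apply neg_le_neg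
        calc s₁/2*t ≤ f r * t := mul_le_mul_of_nonneg_right h3 ht0.le
          _ = t * f r := mul_comm _ _
      apply ENNReal.ofReal_le_ofReal
      exact mul_le_mul h1 h2 (Real.exp_pos _).le (Real.rpow_nonneg hρ0.le _)
    calc ∫⁻ r in Set.Ioc (gs N) R,
        ENNReal.ofReal (r ^ (-(1 / 2) : ℝ) * Real.exp (-(t * f r)))
        ≤ ∫⁻ _ in Set.Ioc (gs N) R, ENNReal.ofReal (ρ^(-(1/2):ℝ) * Real.exp (-(s₁/2*t))) :=
          setLIntegral_mono' measurableSet_Ioc hconst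
      _ = ENNReal.ofReal (ρ^(-(1/2):ℝ) * Real.exp (-(s₁/2*t))) * volume (Set.Ioc (gs N) R) :=
          setLIntegral_const _ _
      _ ≤ ENNReal.ofReal (ρ^(-(1/2):ℝ) * Real.exp (-(s₁/2*t))) * ENNReal.ofReal R := by
          rw [Real.volume_Ioc]
          apply mul_le_mul_right
          apply ENNReal.ofReal_le_ofReal
          linarith [hgs0 N]
      _ = ENNReal.ofReal (ρ^(-(1/2):ℝ) * Real.exp (-(s₁/2*t)) * R) := by
          rw [← ENNReal.ofReal_mul
            (mul_nonneg (Real.rpow_nonneg hρ0.le _) (Real.exp_pos _).le)]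
      _ ≤ ENNReal.ofReal (Real.sqrt c * t ^ (-(β/2))) := by
          apply ENNReal.ofReal_le_ofReal
          have hρpow : ρ^(-(1/2):ℝ) ≤ (c * t^(-β))^(-(1/2):ℝ) :=
            Real.rpow_le_rpow_of_nonpos (by positivity) hρlb (by norm_num)
          have hcalc : (c * t^(-β))^(-(1/2):ℝ) = (Real.sqrt c)⁻¹ * t^(β/2) := by
            rw [Real.mul_rpow hcpos.le (Real.rpow_nonneg ht0.le _)]
            congr 1
            · rw [Real.rpow_neg hcpos.le, Real.sqrt_eq_rpow]
            · rw [← Real.rpow_mul ht0.le, show (-β) * (-(1/2):ℝ) = β/2 by ring]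
          have hexp0 := Real.exp_pos (-(s₁/2*t))
          calc ρ^(-(1/2):ℝ) * Real.exp (-(s₁/2*t)) * R
              ≤ ((Real.sqrt c)⁻¹ * t^(β/2)) * Real.exp (-(s₁/2*t)) * R := by
                apply mul_le_mul_of_nonneg_right _ hR0.le
                exact mul_le_mul_of_nonneg_right (hρpow.trans_eq hcalc) hexp0.le
            _ = (R * (Real.sqrt c)⁻¹) * (t^(β/2) * Real.exp (-(s₁/2*t))) := by ring
            _ ≤ Real.sqrt c * t^(-(β/2)) := (hT t htT).1
  have hP3 : ∫⁻ r in Set.Ioi R,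
      ENNReal.ofReal (r ^ (-(1 / 2) : ℝ) * Real.exp (-(t * f r)))
        ≤ ENNReal.ofReal (Real.sqrt c * t ^ (-(β/2))) := by
    set p := (-(1/2) : ℝ) + -(t*a) with hpdef
    have hp : p < -1 := by rw [hpdef]; linarith [hta2]
    have hps : ∀ r ∈ Set.Ioi R,
        ENNReal.ofReal (r ^ (-(1 / 2) : ℝ) * Real.exp (-(t * f r)))
          ≤ ENNReal.ofReal (r ^ p) := by
      intro r hr
      have hrR : R ≤ r := le_of_lt hr
      have hr0 : 0 < r := lt_of_lt_of_le hR0 hrR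
      have hflog := hflogR r hrR
      have h1 : Real.exp (-(t * f r)) ≤ r ^ (-(t*a)) := by
        rw [Real.rpow_def_of_pos hr0]
        apply Real.exp_le_exp.mpr
        have h2 : t * (a * Real.log r) ≤ t * f r := mul_le_mul_of_nonneg_left hflog ht0.le
        have heq : Real.log r * -(t*a) = -(t*(a*Real.log r)) := by ring
        rw [heq]
        exact neg_le_neg h2
      apply ENNReal.ofReal_le_ofReal
      calc r ^ (-(1 / 2) : ℝ) * Real.exp (-(t * f r)) ≤ r ^ (-(1 / 2) : ℝ) * r ^ (-(t*a)) :=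
          mul_le_mul_of_nonneg_left h1 (Real.rpow_nonneg hr0.le _)
        _ = r ^ p := by rw [hpdef, Real.rpow_add hr0]
    refine le_trans (setLIntegral_mono' measurableSet_Ioi hps) ?_
    rw [lint_Ioi_rpow p R hp hR0]
    apply ENNReal.ofReal_le_ofReal
    have hp1 : p + 1 = 1/2 + -(t*a) := by rw [hpdef]; ring
    have hRp : (0:ℝ) < R ^ (p+1) := Real.rpow_pos_of_pos hR0 _
    have e1 : -R ^ (p+1) / (p+1) = R ^ (p+1) / (-(p+1)) := by
      rw [div_neg, neg_div]
    have h2 : R ^ (p+1) / (-(p+1)) ≤ R ^ (p+1) := by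
      apply div_le_self hRp.le
      rw [hp1]; linarith [hta2]
    have e5 : (1:ℝ) ≤ t^(β/2 : ℝ) := by
      calc (1:ℝ) = t^(0:ℝ) := (Real.rpow_zero t).symm
        _ ≤ t^(β/2 : ℝ) := Real.rpow_le_rpow_of_exponent_le ht1 (by linarith)
    have h3 : R ^ (p+1) ≤ 2 * Real.sqrt R * (t ^ (β/2) * Real.exp (-(a*Real.log 2*t))) := by
      have e2 : R ^ (p+1) = R^(1/2:ℝ) * R^(-(t*a)) := by
        rw [hp1, Real.rpow_add hR0]
      have e3 : R^(-(t*a)) ≤ Real.exp (-(a*Real.log 2*t)) := by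
        rw [Real.rpow_def_of_pos hR0]
        apply Real.exp_le_exp.mpr
        have hlog2 : Real.log 2 ≤ Real.log R := Real.log_le_log two_pos hR2
        have hta0 : (0:ℝ) ≤ t*a := by linarith
        have h5 := mul_le_mul_of_nonneg_right hlog2 hta0
        have e6 : Real.log R * -(t*a) = -(Real.log R * (t*a)) := by ring
        have e7 : -(a*Real.log 2*t) = -(Real.log 2 * (t*a)) := by ring
        rw [e6, e7]
        exact neg_le_neg h5
      have e4 : R^(1/2:ℝ) = Real.sqrt R := (Real.sqrt_eq_rpow R).symm
      have hexpE := Real.exp_pos (-(a*Real.log 2*t))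
      calc R ^ (p+1) = Real.sqrt R * R^(-(t*a)) := by rw [e2, e4]
        _ ≤ Real.sqrt R * Real.exp (-(a*Real.log 2*t)) :=
            mul_le_mul_of_nonneg_left e3 (Real.sqrt_nonneg R)
        _ = Real.sqrt R * (1 * Real.exp (-(a*Real.log 2*t))) := by ring
        _ ≤ Real.sqrt R * (t^(β/2) * Real.exp (-(a*Real.log 2*t))) := by
            apply mul_le_mul_of_nonneg_left _ (Real.sqrt_nonneg R)
            exact mul_le_mul_of_nonneg_right e5 hexpE.le
        _ ≤ 2 * Real.sqrt R * (t^(β/2) * Real.exp (-(a*Real.log 2*t))) := by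
            apply mul_le_mul_of_nonneg_right _
              (mul_nonneg (Real.rpow_pos_of_pos ht0 _).le hexpE.le)
            linarith [Real.sqrt_nonneg R]
    calc -R ^ (p+1) / (p+1) = R ^ (p+1) / (-(p+1)) := e1
      _ ≤ R ^ (p+1) := h2
      _ ≤ 2 * Real.sqrt R * (t ^ (β/2) * Real.exp (-(a*Real.log 2*t))) := h3
      _ ≤ Real.sqrt c * t ^ (-(β/2)) := (hT t htT).2
  have hc2 : Real.sqrt c * t ^ (-(β/2)) ≤ Real.sqrt ρ := by
    rw [hρdef]
    exact hcomp t ht0 hinv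
  rw [hsplit]
  refine le_trans (le_trans (lintegral_union_le _ _ _) (add_le_add hP0
    (le_trans (lintegral_union_le _ _ _) (add_le_add hP1
      (le_trans (lintegral_union_le _ _ _) (add_le_add
        (hP2.trans (ENNReal.ofReal_le_ofReal hc2))
        (hP3.trans (ENNReal.ofReal_le_ofReal hc2)))))))) ?_
  rw [← ENNReal.ofReal_add (Real.sqrt_nonneg _) (Real.sqrt_nonneg _),
    ← ENNReal.ofReal_add (mul_nonneg hS0 (Real.sqrt_nonneg _))
      (by positivity),
    ← ENNReal.ofReal_add (by positivity)
      (add_nonneg (mul_nonneg hS0 (Real.sqrt_nonneg _)) (by positivity))]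
  exact ENNReal.ofReal_le_ofReal (le_of_eq (by ring))
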